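/- For real numbers a > b ≥ c > d > 0, the following chain inequality holds: ((a^b - b^b)/(c^b - d^b) - (a^d - b^d)/(c^d - d^d))/(b - d) < ((a^a - b^a)/(c^a - d^a) - (a^c - b^c)/(c^c - d^c))/(a - c). -/

import Mathlib

open Real Set

private lemma l1 {t : ℝ} (ht : 0 < t) : 2 * (Real.exp t - 1) < t * (Real.exp t + 1) := by
  have key : StrictMonoOn (fun u : ℝ => (u - 2) * Real.exp u + (u + 2)) (Ici 0) := by
    apply strictMonoOn_of_deriv_pos (convex_Ici 0)
    · fun_prop
    · intro u hu
      rw [interior_Ici] at hu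
      have hd : HasDerivAt (fun u : ℝ => (u - 2) * Real.exp u + (u + 2))
          ((1 * Real.exp u + (u - 2) * Real.exp u) + 1) u := by
        exact ((((hasDerivAt_id u).sub_const 2).mul (Real.hasDerivAt_exp u)).add
          ((hasDerivAt_id u).add_const 2))
      rw [hd.deriv]
      have h2 : (-u) + 1 < Real.exp (-u) := Real.add_one_lt_exp (by simp [ne_of_gt (mem_Ioi.mp hu)])
      have h3 : (-u + 1) * Real.exp u < 1 := by
        have := mul_lt_mul_of_pos_right h2 (Real.exp_pos u)
        rwa [← Real.exp_add, neg_add_cancel, Real.exp_zero] at this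
      nlinarith [Real.exp_pos u]
  have h := key (self_mem_Ici) (mem_Ici.mpr ht.le) ht
  simp only [Real.exp_zero] at h
  nlinarith [h]

private lemma key2 {s t : ℝ} (hs : 0 < s) (ht : 0 < t) :
    t ^ 2 < Real.exp s * (t - s * (Real.exp t - 1)) ^ 2
      + t ^ 2 * (Real.exp s - 1) * Real.exp t := by
  have hFt : t + 1 < Real.exp t := Real.add_one_lt_exp (ne_of_gt ht)
  set F := Real.exp t with hF
  have key : StrictMonoOn (fun σ : ℝ => Real.exp σ * ((t - σ * (F - 1)) ^ 2 + t ^ 2 * F))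
      (Ici 0) := by
    apply strictMonoOn_of_deriv_pos (convex_Ici 0)
    · fun_prop
    · intro σ hσ
      rw [interior_Ici] at hσ
      have hd : HasDerivAt (fun σ : ℝ => Real.exp σ * ((t - σ * (F - 1)) ^ 2 + t ^ 2 * F))
          (Real.exp σ * ((t - σ * (F - 1)) ^ 2 + t ^ 2 * F
            - 2 * (F - 1) * (t - σ * (F - 1)))) σ := by
        have h := (Real.hasDerivAt_exp σ).mul
          ((((hasDerivAt_const σ t).sub ((hasDerivAt_id σ).mul_const (F - 1))).pow 2).add
            (hasDerivAt_const σ (t ^ 2 * F)))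
        refine h.congr_deriv ?_
        simp only [Pi.mul_apply, Pi.add_apply, Pi.sub_apply, Pi.pow_apply, id_eq]
        norm_num
        ring
      rw [hd.deriv]
      have hl1 := l1 ht
      have h1 : 0 < σ * (F - 1) := mul_pos hσ (by linarith)
      have h2 : 0 < (F - 1) - t := by linarith
      have hE := Real.exp_pos σ
      have hkey : 0 < (t - σ * (F - 1)) ^ 2 + t ^ 2 * F
          - 2 * (F - 1) * (t - σ * (F - 1)) := by
        have e1 : 0 < t * (t * (F + 1) - 2 * (F - 1)) := mul_pos ht (by nlinarith)
        have e2 : 0 < σ * (F - 1) * (σ * (F - 1) + 2 * ((F - 1) - t)) :=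
          mul_pos h1 (by nlinarith)
        nlinarith [e1, e2]
      nlinarith [mul_pos hE hkey]
  have h := key (self_mem_Ici) (mem_Ici.mpr hs.le) hs
  simp only [Real.exp_zero] at h
  nlinarith [h]

private lemma hexp' (c x : ℝ) : HasDerivAt (fun y : ℝ => Real.exp (c * y)) (Real.exp (c * x) * c) x := by
  simpa using ((hasDerivAt_id x).const_mul c).exp

set_option maxHeartbeats 1000000 in
private lemma conv {ρ α β : ℝ} (hα : 0 < α) (hβ : 0 < β) (hρ : β ≤ ρ) :
    StrictConvexOn ℝ (Ioi (0:ℝ))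
      (fun x => (Real.exp ((ρ + α) * x) - Real.exp (ρ * x)) / (Real.exp (β * x) - 1)) := by
  set P : ℝ → ℝ := fun x => Real.exp ((ρ + α) * x) - Real.exp (ρ * x) with hP
  set Q : ℝ → ℝ := fun x => Real.exp (β * x) - 1 with hQ
  set P1 : ℝ → ℝ := fun x => Real.exp ((ρ + α) * x) * (ρ + α) - Real.exp (ρ * x) * ρ with hP1
  set P2 : ℝ → ℝ := fun x => Real.exp ((ρ + α) * x) * (ρ + α) * (ρ + α)
    - Real.exp (ρ * x) * ρ * ρ with hP2
  set Q1 : ℝ → ℝ := fun x => Real.exp (β * x) * β with hQ1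
  set Q2 : ℝ → ℝ := fun x => Real.exp (β * x) * β * β with hQ2
  set F1 : ℝ → ℝ := fun x => (P1 x * Q x - P x * Q1 x) / (Q x) ^ 2 with hF1
  set F2 : ℝ → ℝ := fun x =>
    ((P2 x * Q x - P x * Q2 x) * Q x - 2 * Q1 x * (P1 x * Q x - P x * Q1 x)) / (Q x) ^ 3 with hF2
  have hQpos : ∀ x ∈ Ioi (0:ℝ), 0 < Q x := by
    intro x hx
    have hx' : (0:ℝ) < x := hx
    have : Real.exp 0 < Real.exp (β * x) := Real.exp_lt_exp.mpr (mul_pos hβ hx')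
    simp only [Real.exp_zero] at this
    simp only [hQ]
    linarith
  have hPd : ∀ x : ℝ, HasDerivAt P (P1 x) x := fun x => (hexp' (ρ + α) x).sub (hexp' ρ x)
  have hQd : ∀ x : ℝ, HasDerivAt Q (Q1 x) x := fun x => (hexp' β x).sub_const 1
  have hP1d : ∀ x : ℝ, HasDerivAt P1 (P2 x) x :=
    fun x => ((hexp' (ρ + α) x).mul_const (ρ + α)).sub ((hexp' ρ x).mul_const ρ)
  have hQ1d : ∀ x : ℝ, HasDerivAt Q1 (Q2 x) x := fun x => (hexp' β x).mul_const β
  have hFd : ∀ x ∈ Ioi (0:ℝ), HasDerivAt (fun x => P x / Q x) (F1 x) x := by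
    intro x hx
    exact (hPd x).div (hQd x) (ne_of_gt (hQpos x hx))
  have hF1d : ∀ x ∈ Ioi (0:ℝ), HasDerivAt F1 (F2 x) x := by
    intro x hx
    have hQx := hQpos x hx
    have h := (((hP1d x).mul (hQd x)).sub ((hPd x).mul (hQ1d x))).div
      ((hQd x).pow 2) (pow_ne_zero 2 (ne_of_gt hQx))
    refine h.congr_deriv ?_
    simp only [hF2, Pi.div_apply, Pi.pow_apply, Pi.sub_apply, Pi.mul_apply]
    field_simp
    ring
  apply strictConvexOn_of_deriv2_pos (convex_Ioi 0)
  · intro x hx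
    exact ((hPd x).div (hQd x) (ne_of_gt (hQpos x hx))).continuousAt.continuousWithinAt
  · intro x hx
    rw [interior_Ioi] at hx
    have hx' : (0:ℝ) < x := hx
    have e2 : deriv^[2] (fun x => P x / Q x) x = F2 x := by
      have h1 : Set.EqOn (deriv fun x => P x / Q x) F1 (Ioi 0) := fun y hy => (hFd y hy).deriv
      have h2 : (deriv fun x => P x / Q x) =ᶠ[nhds x] F1 :=
        Filter.eventuallyEq_of_mem (Ioi_mem_nhds hx') h1
      show deriv (deriv fun x => P x / Q x) x = F2 x
      rw [h2.deriv_eq]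
      exact (hF1d x hx').deriv
    rw [e2]
    -- positivity of F2
    have hQx := hQpos x hx'
    set E := Real.exp (α * x) with hE
    set F := Real.exp (β * x) with hF
    set R := Real.exp (ρ * x) with hR
    have hRE : Real.exp ((ρ + α) * x) = R * E := by
      rw [show (ρ + α) * x = ρ * x + α * x by ring, Real.exp_add]
    have hE1 : 1 + α * x < E := by
      have h := Real.add_one_lt_exp (ne_of_gt (mul_pos hα hx'))
      rw [hE]; linarith
    have hF1' : 1 + β * x < F := by
      have h := Real.add_one_lt_exp (ne_of_gt (mul_pos hβ hx'))
      rw [hF]; linarith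
    have hsE : E - 1 < α * x * E := by
      have h2 : (-(α * x)) + 1 < Real.exp (-(α * x)) :=
        Real.add_one_lt_exp (by simp [ne_of_gt (mul_pos hα hx')])
      have h3 : (-(α * x) + 1) * E < 1 := by
        have := mul_lt_mul_of_pos_right h2 (Real.exp_pos (α * x))
        rwa [← Real.exp_add, neg_add_cancel, Real.exp_zero, ← hE] at this
      nlinarith [Real.exp_pos (α * x)]
    have hEpos : (0:ℝ) < E := Real.exp_pos _
    have hFpos : (0:ℝ) < F := Real.exp_pos _
    have hRpos : (0:ℝ) < R := Real.exp_pos _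
    have hE1pos : 0 < E - 1 := by linarith [mul_pos hα hx']
    have hF1pos : 0 < F - 1 := by linarith [mul_pos hβ hx']
    have hwt : β * x ≤ ρ * x := mul_le_mul_of_nonneg_right hρ hx'.le
    set s := α * x with hs
    set t := β * x with hts
    set w := ρ * x with hw
    have hspos : 0 < s := mul_pos hα hx'
    have htpos : 0 < t := mul_pos hβ hx'
    set M : ℝ := w * (E - 1) * (F - 1) + s * E * (F - 1) - t * F * (E - 1) with hM
    set M0 : ℝ := s * E * (F - 1) - t * (E - 1) with hM0
    have hM0pos : 0 < M0 := by
      have h1 : t * (E - 1) < (F - 1) * (E - 1) := by nlinarith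
      have h2 : (F - 1) * (E - 1) < (F - 1) * (s * E) := by nlinarith
      simp only [hM0]; nlinarith
    have hMge : M0 ≤ M := by
      have : M - M0 = (w - t) * (E - 1) * (F - 1) := by simp only [hM, hM0]; ring
      nlinarith [mul_nonneg (mul_nonneg (sub_nonneg.mpr hwt) hE1pos.le) hF1pos.le]
    have hkey := key2 hspos htpos
    rw [← hE, ← hF] at hkey
    have hPpos : 0 < E * (t - s * (F - 1)) ^ 2 + t ^ 2 * (E - 1) * F - t ^ 2 := by linarith
    have hfinal : 0 < M ^ 2 + t ^ 2 * F * (E - 1) ^ 2 - s ^ 2 * E * (F - 1) ^ 2 := by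
      have hMsq : M0 ^ 2 ≤ M ^ 2 := by nlinarith
      have hident : M0 ^ 2 + t ^ 2 * F * (E - 1) ^ 2 - s ^ 2 * E * (F - 1) ^ 2
          = (E - 1) * (E * (t - s * (F - 1)) ^ 2 + t ^ 2 * (E - 1) * F - t ^ 2) := by
        simp only [hM0]; ring
      nlinarith [mul_pos hE1pos hPpos]
    -- T > 0
    have hT : 0 < (P2 x * Q x - P x * Q2 x) * Q x - 2 * Q1 x * (P1 x * Q x - P x * Q1 x) := by
      have hid : x ^ 2 * (E - 1) *
          ((P2 x * Q x - P x * Q2 x) * Q x - 2 * Q1 x * (P1 x * Q x - P x * Q1 x))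
          = R * (M ^ 2 + t ^ 2 * F * (E - 1) ^ 2 - s ^ 2 * E * (F - 1) ^ 2) := by
        simp only [hP, hQ, hP1, hP2, hQ1, hQ2, hRE, hM, hs, hts, hw, ← hE, ← hF, ← hR]
        ring
      have hA : 0 < x ^ 2 * (E - 1) := by positivity
      have hpos : 0 < x ^ 2 * (E - 1) *
          ((P2 x * Q x - P x * Q2 x) * Q x - 2 * Q1 x * (P1 x * Q x - P x * Q1 x)) := by
        rw [hid]; exact mul_pos hRpos hfinal
      by_contra hc
      push_neg at hc
      nlinarith [mul_nonpos_of_nonneg_of_nonpos hA.le hc]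
    simp only [hF2]
    positivity

theorem stmt6 (a b c d : ℝ) (hab : a > b) (hbc : b ≥ c) (hcd : c > d) (hd : d > 0) :
    ((a ^ b - b ^ b) / (c ^ b - d ^ b) - (a ^ d - b ^ d) / (c ^ d - d ^ d)) / (b - d) <
    ((a ^ a - b ^ a) / (c ^ a - d ^ a) - (a ^ c - b ^ c) / (c ^ c - d ^ c)) / (a - c) := by
  have hc : (0:ℝ) < c := lt_trans hd hcd
  have hb : (0:ℝ) < b := lt_of_lt_of_le hc hbc
  have ha : (0:ℝ) < a := lt_trans hb hab
  set ρ := Real.log b - Real.log d with hρdef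
  set α := Real.log a - Real.log b with hαdef
  set β := Real.log c - Real.log d with hβdef
  have hα : 0 < α := sub_pos.mpr (Real.log_lt_log hb hab)
  have hβ : 0 < β := sub_pos.mpr (Real.log_lt_log hd hcd)
  have hρβ : β ≤ ρ := sub_le_sub_right (Real.log_le_log hc hbc) _
  set g : ℝ → ℝ :=
    fun x => (Real.exp ((ρ + α) * x) - Real.exp (ρ * x)) / (Real.exp (β * x) - 1) with hg
  have hgconv := conv hα hβ hρβ
  have hgeq : ∀ x : ℝ, 0 < x → (a ^ x - b ^ x) / (c ^ x - d ^ x) = g x := by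
    intro x hx
    have hnum : a ^ x - b ^ x
        = Real.exp (Real.log d * x) * (Real.exp ((ρ + α) * x) - Real.exp (ρ * x)) := by
      rw [Real.rpow_def_of_pos ha, Real.rpow_def_of_pos hb, mul_sub, ← Real.exp_add,
        ← Real.exp_add]
      rw [show Real.log d * x + (ρ + α) * x = Real.log a * x by rw [hρdef, hαdef]; ring,
        show Real.log d * x + ρ * x = Real.log b * x by rw [hρdef]; ring]
    have hden : c ^ x - d ^ x = Real.exp (Real.log d * x) * (Real.exp (β * x) - 1) := by
      rw [Real.rpow_def_of_pos hc, Real.rpow_def_of_pos hd, mul_sub, mul_one, ← Real.exp_add]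
      rw [show Real.log d * x + β * x = Real.log c * x by rw [hβdef]; ring]
    rw [hnum, hden, hg, mul_div_mul_left _ _ (Real.exp_ne_zero _)]
  have hdm : d ∈ Ioi (0:ℝ) := hd
  have hcm : c ∈ Ioi (0:ℝ) := hc
  have hbm : b ∈ Ioi (0:ℝ) := hb
  have ham : a ∈ Ioi (0:ℝ) := ha
  have step1 : (g b - g d) / (b - d) < (g a - g d) / (a - d) :=
    hgconv.secant_strict_mono hdm hbm ham (ne_of_gt (lt_of_lt_of_le hcd hbc))
      (ne_of_gt (lt_trans (lt_of_lt_of_le hcd hbc) hab)) hab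
  have step2 : (g d - g a) / (d - a) < (g c - g a) / (c - a) :=
    hgconv.secant_strict_mono ham hdm hcm
      (ne_of_lt (lt_trans (lt_of_lt_of_le hcd hbc) hab))
      (ne_of_lt (lt_of_lt_of_le (lt_of_le_of_lt hbc.ge hab) le_rfl)) hcd
  have e1 : (g d - g a) / (d - a) = (g a - g d) / (a - d) := by
    rw [← neg_sub (g a) (g d), ← neg_sub a d, neg_div_neg_eq]
  have e2 : (g c - g a) / (c - a) = (g a - g c) / (a - c) := by
    rw [← neg_sub (g a) (g c), ← neg_sub a c, neg_div_neg_eq]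
  rw [e1, e2] at step2
  have := lt_trans step1 step2
  rw [hgeq a ha, hgeq b hb, hgeq c hc, hgeq d hd]
  exact this
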